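/- Any tripartite correlation of the form P(abc|xyz) = Σ_λ q_λ P(a|x,ρ_A^λ)P(b|y,ρ_B^λ)P_λ(c|z), where Alice's and Bob's distributions arise from the fixed qubit measurements A₀=σₓ, A₁=σ_y, B₀=(σₓ−σ_y)/√2, B₁=(σₓ+σ_y)/√2 on single-qubit states ρ_A^λ, ρ_B^λ, and P_λ(c|z) are arbitrary conditional distributions, satisfies the Svetlichny expression bound ⟨S⟩ ≤ 2√2. -/

import Mathlib

open Matrix ComplexOrder

noncomputable def σx : Matrix (Fin 2) (Fin 2) ℂ := !![0, 1; 1, 0]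
noncomputable def σy : Matrix (Fin 2) (Fin 2) ℂ := !![0, -Complex.I; Complex.I, 0]

/-- Alice's observables: A₀ = σₓ, A₁ = σ_y. -/
noncomputable def Aobs : Fin 2 → Matrix (Fin 2) (Fin 2) ℂ := fun x => if x = 0 then σx else σy

/-- Bob's observables: B₀ = (σₓ − σ_y)/√2, B₁ = (σₓ + σ_y)/√2. -/
noncomputable def Bobs : Fin 2 → Matrix (Fin 2) (Fin 2) ℂ := fun y =>
  if y = 0 then (Real.sqrt 2 : ℂ)⁻¹ • (σx - σy) else (Real.sqrt 2 : ℂ)⁻¹ • (σx + σy)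

/-- The projector onto the `(-1)^a` eigenspace of a ±1-valued observable `O`. -/
noncomputable def proj (O : Matrix (Fin 2) (Fin 2) ℂ) (a : Fin 2) : Matrix (Fin 2) (Fin 2) ℂ :=
  (2 : ℂ)⁻¹ • (1 + ((-1 : ℂ) ^ (a : ℕ)) • O)

/-- The probability of outcome `a` when measuring observable `O` on qubit state `ρ`. -/
noncomputable def probOf (O : Matrix (Fin 2) (Fin 2) ℂ) (a : Fin 2)
    (ρ : Matrix (Fin 2) (Fin 2) ℂ) : ℝ := ((proj O a * ρ).trace).re

/-- The correlator ⟨A_x B_y C_z⟩ of a tripartite correlation `P`. -/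
noncomputable def corr (P : Fin 2 → Fin 2 → Fin 2 → Fin 2 → Fin 2 → Fin 2 → ℝ)
    (x y z : Fin 2) : ℝ :=
  ∑ a : Fin 2, ∑ b : Fin 2, ∑ c : Fin 2,
    (-1 : ℝ) ^ ((a + b + c : Fin 2) : ℕ) * P a b c x y z

/-- The Svetlichny expression of a tripartite correlation `P`. -/
noncomputable def Sexpr (P : Fin 2 → Fin 2 → Fin 2 → Fin 2 → Fin 2 → Fin 2 → ℝ) : ℝ :=
  corr P 0 0 1 + corr P 0 1 0 + corr P 1 0 0 - corr P 1 1 1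
    + corr P 0 1 1 + corr P 1 0 1 + corr P 1 1 0 - corr P 0 0 0

lemma probOf_diff (O ρ : Matrix (Fin 2) (Fin 2) ℂ) :
    probOf O 0 ρ - probOf O 1 ρ = ((O * ρ).trace).re := by
  have h : proj O 0 * ρ - proj O 1 * ρ = O * ρ := by
    rw [← sub_mul]
    congr 1
    simp only [proj, Fin.val_zero, Fin.val_one, pow_zero, pow_one, one_smul]
    module
  unfold probOf
  rw [← Complex.sub_re, ← Matrix.trace_sub, h]

lemma qb (ρ : Matrix (Fin 2) (Fin 2) ℂ) (h : ρ.PosSemidef) (ht : ρ.trace = 1) :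
    ((σx * ρ).trace).re ^ 2 + ((σy * ρ).trace).re ^ 2 ≤ 1 := by
  have hH := h.isHermitian
  have h10 : ρ 1 0 = star (ρ 0 1) := (hH.apply 1 0).symm
  have h00 : (ρ 0 0).im = 0 := by
    have : (starRingEnd ℂ) (ρ 0 0) = ρ 0 0 := hH.apply 0 0
    exact Complex.conj_eq_iff_im.mp this
  have h11i : (ρ 1 1).im = 0 := by
    have : (starRingEnd ℂ) (ρ 1 1) = ρ 1 1 := hH.apply 1 1
    exact Complex.conj_eq_iff_im.mp this
  have htre : (ρ 0 0).re + (ρ 1 1).re = 1 := by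
    have := congrArg Complex.re ht
    simpa [Matrix.trace_fin_two] using this
  have hQ1 := h.re_dotProduct_nonneg ![-2 * ρ 0 1, 1]
  have hQ2 := h.re_dotProduct_nonneg ![1, -2 * star (ρ 0 1)]
  simp only [dotProduct, Matrix.mulVec, Fin.sum_univ_two, RCLike.re_to_complex,
    Matrix.cons_val_zero, Matrix.cons_val_one, Matrix.head_cons, Pi.star_apply,
    h10, star_mul', star_star, star_neg, star_ofNat, Complex.star_def,
    Complex.add_re, Complex.mul_re, Complex.mul_im, Complex.add_im,
    Complex.conj_re, Complex.conj_im, Complex.neg_re, Complex.neg_im,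
    Complex.one_re, Complex.one_im, Complex.re_ofNat, Complex.im_ofNat] at hQ1 hQ2
  have hx : ((σx * ρ).trace).re = 2 * (ρ 0 1).re := by
    simp [σx, Matrix.trace_fin_two, Matrix.mul_apply, Fin.sum_univ_two, h10,
      Matrix.vecMul, dotProduct, Complex.add_re, Complex.conj_re]
    ring
  have hy : ((σy * ρ).trace).re = -2 * (ρ 0 1).im := by
    simp [σy, Matrix.trace_fin_two, Matrix.mul_apply, Fin.sum_univ_two, h10,
      Matrix.vecMul, dotProduct, Complex.add_re, Complex.mul_re, Complex.conj_re,
      Complex.conj_im]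
    ring
  rw [hx, hy]
  nlinarith [hQ1, hQ2, htre, h00, h11i, sq_nonneg ((ρ 0 1).re), sq_nonneg ((ρ 0 1).im)]

lemma B0tr (ρ : Matrix (Fin 2) (Fin 2) ℂ) :
    ((Bobs 0 * ρ).trace).re
      = Real.sqrt 2 / 2 * (((σx * ρ).trace).re - ((σy * ρ).trace).re) := by
  have h2 : Real.sqrt 2 ≠ 0 := by positivity
  have hinv : ((Real.sqrt 2 : ℝ))⁻¹ = Real.sqrt 2 / 2 := by
    rw [inv_eq_one_div, div_eq_div_iff h2 (by norm_num : (2:ℝ) ≠ 0), one_mul]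
    exact (Real.mul_self_sqrt (by norm_num)).symm
  rw [show Bobs 0 = (Real.sqrt 2 : ℂ)⁻¹ • (σx - σy) from rfl, smul_mul_assoc,
    Matrix.trace_smul, sub_mul, Matrix.trace_sub]
  rw [← Complex.ofReal_inv, smul_eq_mul]
  rw [Complex.re_ofReal_mul, Complex.sub_re, hinv]

lemma B1tr (ρ : Matrix (Fin 2) (Fin 2) ℂ) :
    ((Bobs 1 * ρ).trace).re
      = Real.sqrt 2 / 2 * (((σx * ρ).trace).re + ((σy * ρ).trace).re) := by
  have h2 : Real.sqrt 2 ≠ 0 := by positivity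
  have hinv : ((Real.sqrt 2 : ℝ))⁻¹ = Real.sqrt 2 / 2 := by
    rw [inv_eq_one_div, div_eq_div_iff h2 (by norm_num : (2:ℝ) ≠ 0), one_mul]
    exact (Real.mul_self_sqrt (by norm_num)).symm
  rw [show Bobs 1 = (Real.sqrt 2 : ℂ)⁻¹ • (σx + σy) from rfl, smul_mul_assoc,
    Matrix.trace_smul, add_mul, Matrix.trace_add]
  rw [← Complex.ofReal_inv, smul_eq_mul]
  rw [Complex.re_ofReal_mul, Complex.add_re, hinv]

lemma svet (u0 u1 v0 v1 c0 c1 : ℝ) (hu : u0^2+u1^2 ≤ 1) (hv : v0^2+v1^2 ≤ 1)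
    (h1 : -1 ≤ c0) (h2 : c0 ≤ 1) (h3 : -1 ≤ c1) (h4 : c1 ≤ 1) :
    c1*(u0*v0-u1*v1) + c0*(u0*v1+u1*v0) ≤ 2 := by
  have hvn : (0:ℝ) ≤ v0^2+v1^2 := by positivity
  have hm : (u0^2+u1^2)*(v0^2+v1^2) ≤ 1 := by
    calc (u0^2+u1^2)*(v0^2+v1^2) ≤ 1*1 := mul_le_mul hu hv hvn (by norm_num)
    _ = 1 := by norm_num
  have hXY : (u0*v0-u1*v1)^2 + (u0*v1+u1*v0)^2 ≤ 1 := by nlinarith [hm]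
  nlinarith [sq_nonneg (c1 - (u0*v0-u1*v1)), sq_nonneg (c0 - (u0*v1+u1*v0))]

theorem stmt4 (n : ℕ) (q : Fin n → ℝ) (hq : ∀ l, 0 ≤ q l) (hq1 : ∑ l, q l = 1)
    (ρA ρB : Fin n → Matrix (Fin 2) (Fin 2) ℂ)
    (hρA : ∀ l, (ρA l).PosSemidef ∧ (ρA l).trace = 1)
    (hρB : ∀ l, (ρB l).PosSemidef ∧ (ρB l).trace = 1)
    (Pc : Fin n → Fin 2 → Fin 2 → ℝ)
    (hPc : ∀ l c z, 0 ≤ Pc l c z) (hPc1 : ∀ l z, ∑ c : Fin 2, Pc l c z = 1)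
    (P : Fin 2 → Fin 2 → Fin 2 → Fin 2 → Fin 2 → Fin 2 → ℝ)
    (hP : ∀ a b c x y z, P a b c x y z =
      ∑ l, q l * probOf (Aobs x) a (ρA l) * probOf (Bobs y) b (ρB l) * Pc l c z) :
    Sexpr P ≤ 2 * Real.sqrt 2 := by
  have hsign : ∀ a b c : Fin 2, ((-1:ℝ)) ^ ((a+b+c : Fin 2):ℕ)
      = (-1)^(a:ℕ) * (-1)^(b:ℕ) * (-1)^(c:ℕ) := by
    intro a b c
    fin_cases a <;> fin_cases b <;> fin_cases c <;>
      norm_num [show ((2:Fin 2):ℕ) = 0 from rfl, show ((3:Fin 2):ℕ) = 1 from rfl,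
        show ((1 + 1 : Fin 2):ℕ) = 0 from rfl, show ((1 + 1 + 1 : Fin 2):ℕ) = 1 from rfl]
  have hcorr : ∀ x y z, corr P x y z = ∑ l, q l
      * (probOf (Aobs x) 0 (ρA l) - probOf (Aobs x) 1 (ρA l))
      * (probOf (Bobs y) 0 (ρB l) - probOf (Bobs y) 1 (ρB l))
      * (Pc l 0 z - Pc l 1 z) := by
    intro x y z
    simp only [corr, hP, hsign, Finset.mul_sum, Fin.sum_univ_two]
    simp only [← Finset.sum_add_distrib]
    refine Finset.sum_congr rfl fun l _ => ?_
    simp only [Fin.val_zero, Fin.val_one, pow_zero, pow_one]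
    ring
  unfold Sexpr
  rw [hcorr 0 0 1, hcorr 0 1 0, hcorr 1 0 0, hcorr 1 1 1, hcorr 0 1 1, hcorr 1 0 1,
    hcorr 1 1 0, hcorr 0 0 0]
  simp only [← Finset.sum_add_distrib, ← Finset.sum_sub_distrib]
  have key : ∀ l ∈ Finset.univ, (q l
      * (probOf (Aobs 0) 0 (ρA l) - probOf (Aobs 0) 1 (ρA l))
      * (probOf (Bobs 0) 0 (ρB l) - probOf (Bobs 0) 1 (ρB l)) * (Pc l 0 1 - Pc l 1 1)
    + q l * (probOf (Aobs 0) 0 (ρA l) - probOf (Aobs 0) 1 (ρA l))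
      * (probOf (Bobs 1) 0 (ρB l) - probOf (Bobs 1) 1 (ρB l)) * (Pc l 0 0 - Pc l 1 0)
    + q l * (probOf (Aobs 1) 0 (ρA l) - probOf (Aobs 1) 1 (ρA l))
      * (probOf (Bobs 0) 0 (ρB l) - probOf (Bobs 0) 1 (ρB l)) * (Pc l 0 0 - Pc l 1 0)
    - q l * (probOf (Aobs 1) 0 (ρA l) - probOf (Aobs 1) 1 (ρA l))
      * (probOf (Bobs 1) 0 (ρB l) - probOf (Bobs 1) 1 (ρB l)) * (Pc l 0 1 - Pc l 1 1)
    + q l * (probOf (Aobs 0) 0 (ρA l) - probOf (Aobs 0) 1 (ρA l))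
      * (probOf (Bobs 1) 0 (ρB l) - probOf (Bobs 1) 1 (ρB l)) * (Pc l 0 1 - Pc l 1 1)
    + q l * (probOf (Aobs 1) 0 (ρA l) - probOf (Aobs 1) 1 (ρA l))
      * (probOf (Bobs 0) 0 (ρB l) - probOf (Bobs 0) 1 (ρB l)) * (Pc l 0 1 - Pc l 1 1)
    + q l * (probOf (Aobs 1) 0 (ρA l) - probOf (Aobs 1) 1 (ρA l))
      * (probOf (Bobs 1) 0 (ρB l) - probOf (Bobs 1) 1 (ρB l)) * (Pc l 0 0 - Pc l 1 0)
    - q l * (probOf (Aobs 0) 0 (ρA l) - probOf (Aobs 0) 1 (ρA l))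
      * (probOf (Bobs 0) 0 (ρB l) - probOf (Bobs 0) 1 (ρB l)) * (Pc l 0 0 - Pc l 1 0))
      ≤ q l * (2 * Real.sqrt 2) := by
    intro l _
    have hA := qb (ρA l) (hρA l).1 (hρA l).2
    have hB := qb (ρB l) (hρB l).1 (hρB l).2
    have hc0 : Pc l 0 0 + Pc l 1 0 = 1 := by
      have := hPc1 l 0; rwa [Fin.sum_univ_two] at this
    have hc1 : Pc l 0 1 + Pc l 1 1 = 1 := by
      have := hPc1 l 1; rwa [Fin.sum_univ_two] at this
    have hA0 : Aobs 0 = σx := rfl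
    have hA1 : Aobs 1 = σy := rfl
    rw [hA0, hA1]
    simp only [probOf_diff, B0tr, B1tr]
    have hsv := svet (((σx * ρA l).trace).re) (((σy * ρA l).trace).re)
      (((σx * ρB l).trace).re) (((σy * ρB l).trace).re)
      (Pc l 0 0 - Pc l 1 0) (Pc l 0 1 - Pc l 1 1) hA hB
      (by linarith [hPc l 0 0, hPc l 1 0]) (by linarith [hPc l 0 0, hPc l 1 0])
      (by linarith [hPc l 0 1, hPc l 1 1]) (by linarith [hPc l 0 1, hPc l 1 1])
    nlinarith [mul_le_mul_of_nonneg_left hsv (mul_nonneg (hq l) (Real.sqrt_nonneg 2))]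
  calc _ ≤ ∑ l, q l * (2 * Real.sqrt 2) := Finset.sum_le_sum key
    _ = 2 * Real.sqrt 2 := by rw [← Finset.sum_mul, hq1, one_mul]
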